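/- Let W be a real symmetric n×n matrix with zero diagonal, and let η ∈ ℝ and λ > 0 be such that I − ηW is positive definite. Let Y be a random vector distributed according to the multivariate Gaussian measure on ℝⁿ with mean 0 and covariance λ (I − ηW)⁻¹. Then for each index i, the conditional expectation of Y_i given the σ-algebra generated by (Y_j)_{j ≠ i} equals η Σ_{j ≠ i} (W i j) Y_j almost surely. -/

import Mathlib

open MeasureTheory ProbabilityTheory Matrix
open scoped Classical
open scoped ENNReal NNReal

/-- The positive semidefinite square root of a positive semidefinite matrix, as defined in
the older Mathlib (`Matrix.PosSemidef.sqrt`, since removed). -/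
noncomputable def Matrix.PosSemidef.sqrt {n 𝕜 : Type*} [Fintype n] [RCLike 𝕜] [PartialOrder 𝕜] [DecidableEq n]
    {A : Matrix n n 𝕜} (hA : A.PosSemidef) : Matrix n n 𝕜 :=
  (hA.1.eigenvectorUnitary : Matrix n n 𝕜) *
    diagonal (((↑) : ℝ → 𝕜) ∘ (√·) ∘ hA.1.eigenvalues) *
    (star hA.1.eigenvectorUnitary : Matrix n n 𝕜)

/-- The standard Gaussian measure on `Fin n → ℝ` (mean 0, identity covariance). -/
noncomputable def stdGaussian (n : ℕ) : Measure (Fin n → ℝ) :=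
  Measure.pi fun _ => gaussianReal 0 1

/-- The multivariate Gaussian measure on `Fin n → ℝ` with mean `0` and (positive
semidefinite) covariance matrix `S`. (Junk, the zero measure, if `S` is not positive
semidefinite.) -/
noncomputable def gaussianOfCov {n : ℕ} (S : Matrix (Fin n) (Fin n) ℝ) :
    Measure (Fin n → ℝ) :=
  if h : S.PosSemidef then (stdGaussian n).map (fun x => h.sqrt.mulVec x) else 0

theorem psd_sqrt_mul_self {n : ℕ} {A : Matrix (Fin n) (Fin n) ℝ} (hA : A.PosSemidef) :
    hA.sqrt * hA.sqrt = A := by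
  have hU : (star hA.1.eigenvectorUnitary : Matrix (Fin n) (Fin n) ℝ) * hA.1.eigenvectorUnitary = 1 :=
    Unitary.coe_star_mul_self _
  have hD : diagonal ((RCLike.ofReal : ℝ → ℝ) ∘ (√·) ∘ hA.1.eigenvalues) *
      diagonal ((RCLike.ofReal : ℝ → ℝ) ∘ (√·) ∘ hA.1.eigenvalues) = diagonal (RCLike.ofReal ∘ hA.1.eigenvalues) := by
    rw [diagonal_mul_diagonal]
    congr 1
    funext k
    simp [Real.mul_self_sqrt (hA.eigenvalues_nonneg k)]
  calc hA.sqrt * hA.sqrt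
      = (hA.1.eigenvectorUnitary : Matrix (Fin n) (Fin n) ℝ) *
          (diagonal ((RCLike.ofReal : ℝ → ℝ) ∘ (√·) ∘ hA.1.eigenvalues) *
          ((star hA.1.eigenvectorUnitary : Matrix (Fin n) (Fin n) ℝ) * hA.1.eigenvectorUnitary) *
          diagonal ((RCLike.ofReal : ℝ → ℝ) ∘ (√·) ∘ hA.1.eigenvalues)) *
          (star hA.1.eigenvectorUnitary : Matrix (Fin n) (Fin n) ℝ) := by
        simp only [Matrix.PosSemidef.sqrt, Matrix.mul_assoc]
    _ = A := by
        rw [hU, Matrix.mul_one, hD]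
        conv_rhs => rw [hA.1.spectral_theorem]
        simp [Unitary.conjStarAlgAut_apply]

theorem psd_sqrt_isHermitian {n : ℕ} {A : Matrix (Fin n) (Fin n) ℝ} (hA : A.PosSemidef) :
    hA.sqrt.IsHermitian := by
  show hA.sqrtᴴ = hA.sqrt
  simp [Matrix.PosSemidef.sqrt, Matrix.conjTranspose_mul, Matrix.mul_assoc,
    Matrix.star_eq_conjTranspose, Matrix.conjTranspose_eq_transpose_of_trivial]

theorem lintegral_fin_prod : ∀ {n : ℕ} (μ : Fin n → Measure ℝ) [∀ i, SigmaFinite (μ i)]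
    (f : Fin n → ℝ → ℝ≥0∞), (∀ i, Measurable (f i)) →
    ∫⁻ x : Fin n → ℝ, ∏ i, f i (x i) ∂Measure.pi μ = ∏ i, ∫⁻ t, f i t ∂μ i := by
  intro n
  induction n with
  | zero =>
    intro μ _ f hf
    simp [lintegral_const, Measure.pi_univ]
  | succ m ih =>
    intro μ _ f hf
    have hg : Measurable fun x : Fin (m+1) → ℝ => ∏ i, f i (x i) :=
      Finset.measurable_prod _ fun i _ => (hf i).comp (measurable_pi_apply i)
    have h := (measurePreserving_piFinSuccAbove μ 0).symm
    rw [← h.lintegral_comp hg]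
    simp_rw [MeasurableEquiv.piFinSuccAbove_symm_apply, Fin.insertNthEquiv,
      Fin.prod_univ_succ, Fin.insertNth_zero]
    simp only [Fin.zero_succAbove, cast_eq, Function.comp_def, Fin.cons_zero, Fin.cons_succ,
      Equiv.coe_fn_mk]
    have key := lintegral_prod_mul (μ := μ 0) (ν := Measure.pi fun j : Fin m => μ j.succ)
      (f := fun t => f 0 t)
      (g := fun y : Fin m → ℝ => ∏ x : Fin m, f x.succ (y x)) ((hf 0).aemeasurable)
      ((Finset.measurable_prod _ fun i _ => (hf i.succ).comp (measurable_pi_apply i)).aemeasurable)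
    rw [key, ih _ _ (fun i => hf i.succ)]

theorem stdGaussian_eq_withDensity (n : ℕ) :
    stdGaussian n
      = (volume : Measure (Fin n → ℝ)).withDensity fun x => ∏ i, gaussianPDF 0 1 (x i) := by
  have hρ : Measurable fun x : Fin n → ℝ => ∏ i, gaussianPDF 0 1 (x i) :=
    Finset.measurable_prod _ fun i _ => (measurable_gaussianPDF 0 1).comp (measurable_pi_apply i)
  rw [_root_.stdGaussian]
  refine Measure.pi_eq (μ := fun _ : Fin n => gaussianReal 0 1) fun s hs => ?_
  rw [withDensity_apply _ (MeasurableSet.univ_pi hs), ← lintegral_indicator (MeasurableSet.univ_pi hs) _]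
  have hind : (Set.indicator (Set.univ.pi s) fun x : Fin n → ℝ => ∏ i, gaussianPDF 0 1 (x i))
      = fun x => ∏ i, (gaussianPDF 0 1 (x i) * Set.indicator (s i) (fun _ => 1) (x i)) := by
    funext x
    by_cases hx : x ∈ Set.univ.pi s
    · rw [Set.indicator_of_mem hx, Finset.prod_mul_distrib]
      have : ∀ i, Set.indicator (s i) (fun _ => (1:ℝ≥0∞)) (x i) = 1 := fun i =>
        Set.indicator_of_mem (hx i (Set.mem_univ i)) _
      simp [this]
    · rw [Set.indicator_of_notMem hx]
      simp only [Set.mem_pi, Set.mem_univ, forall_true_left, not_forall] at hx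
      obtain ⟨i0, hi0⟩ := hx
      refine (Finset.prod_eq_zero (Finset.mem_univ i0) ?_).symm
      rw [Set.indicator_of_notMem (by simpa using hi0), mul_zero]
  rw [hind]
  have key := lintegral_fin_prod (fun _ : Fin n => (volume : Measure ℝ))
    (fun i t => gaussianPDF 0 1 t * Set.indicator (s i) (fun _ => 1) t)
    (fun i => (measurable_gaussianPDF 0 1).mul (measurable_one.indicator (hs i)))
  refine Eq.trans key ?_
  refine Finset.prod_congr rfl fun i _ => ?_
  have : ∀ t : ℝ, gaussianPDF 0 1 t * Set.indicator (s i) (fun _ => (1:ℝ≥0∞)) t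
      = Set.indicator (s i) (gaussianPDF 0 1) t := by
    intro t
    by_cases ht : t ∈ s i <;> simp [Set.indicator_of_mem, Set.indicator_of_notMem, ht]
  simp_rw [this]
  rw [lintegral_indicator (hs i) _, gaussianReal_of_var_ne_zero 0 one_ne_zero,
    withDensity_apply _ (hs i)]

theorem map_withDensity_equiv {α β : Type*} [MeasurableSpace α] [MeasurableSpace β]
    (μ : Measure α) (e : α ≃ᵐ β) {g : α → ℝ≥0∞} (hg : Measurable g) :
    (μ.withDensity g).map e = (μ.map e).withDensity (g ∘ e.symm) := by
  ext s hs
  rw [Measure.map_apply e.measurable hs, withDensity_apply _ (e.measurable hs),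
    withDensity_apply _ hs,
    setLIntegral_map hs (hg.comp e.symm.measurable) e.measurable]
  refine setLIntegral_congr_fun (e.measurable hs) (fun x _ => ?_)
  simp

theorem stdGaussian_map_eval (n : ℕ) (k : Fin n) :
    (stdGaussian n).map (fun x => x k) = gaussianReal 0 1 := by
  ext s hs
  rw [Measure.map_apply (measurable_pi_apply k) hs]
  have hp : (fun x : Fin n → ℝ => x k) ⁻¹' s
      = Set.univ.pi (Function.update (fun _ : Fin n => (Set.univ : Set ℝ)) k s) := by
    ext x
    simp only [Set.mem_preimage, Set.mem_pi, Set.mem_univ, forall_true_left,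
      Function.update_apply]
    constructor
    · intro h j; split <;> simp_all
    · intro h; simpa using h k
  rw [hp, _root_.stdGaussian, Measure.pi_pi]
  have : ∀ j : Fin n, (gaussianReal 0 1) (Function.update (fun _ : Fin n => Set.univ) k s j)
      = if j = k then (gaussianReal 0 1) s else 1 := by
    intro j
    by_cases hj : j = k <;> simp [Function.update_apply, hj]
  simp_rw [this]
  simp

theorem integrable_eval_stdGaussian (n : ℕ) (k : Fin n) :
    Integrable (fun x : Fin n → ℝ => x k) (stdGaussian n) := by
  have h1 : Integrable (fun t : ℝ => t) (gaussianReal 0 1) := by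
    rw [gaussianReal_of_var_ne_zero 0 one_ne_zero,
      integrable_withDensity_iff (measurable_gaussianPDF 0 1)
        (ae_of_all _ fun x => ENNReal.ofReal_lt_top)]
    have hto : ∀ x : ℝ, (gaussianPDF 0 1 x).toReal = gaussianPDFReal 0 1 x := fun x =>
      ENNReal.toReal_ofReal (gaussianPDFReal_nonneg 0 1 x)
    simp_rw [hto, gaussianPDFReal]
    have h2 := (integrable_mul_exp_neg_mul_sq (by norm_num : (0:ℝ) < 1/2)).const_mul
      ((Real.sqrt (2 * Real.pi * (1:ℝ≥0)))⁻¹)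
    refine h2.congr (ae_of_all _ fun x => ?_)
    simp only [NNReal.coe_one]
    rw [show -(x - 0) ^ 2 / (2 * (1:ℝ)) = -(1/2) * x ^ 2 by ring]
    ring
  have h3 : Integrable (fun t : ℝ => t) ((stdGaussian n).map (fun x => x k)) := by
    rw [stdGaussian_map_eval]; exact h1
  exact (integrable_map_measure measurable_id.aestronglyMeasurable
    (measurable_pi_apply k).aemeasurable).mp h3

theorem integrable_dot_stdGaussian (n : ℕ) (v : Fin n → ℝ) :
    Integrable (fun x : Fin n → ℝ => v ⬝ᵥ x) (stdGaussian n) := by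
  simp_rw [dotProduct]
  exact integrable_finset_sum _ fun j _ => (integrable_eval_stdGaussian n j).const_mul (v j)

theorem measurePreserving_reflection_stdGaussian {n : ℕ} (c : Fin n → ℝ) {lam : ℝ}
    (hlam : 0 < lam) (hcc : c ⬝ᵥ c = lam) :
    MeasurePreserving (fun x : Fin n → ℝ => x - ((2 / lam) * (c ⬝ᵥ x)) • c)
      (stdGaussian n) (stdGaussian n) := by
  set R : (Fin n → ℝ) → (Fin n → ℝ) := fun x => x - ((2 / lam) * (c ⬝ᵥ x)) • c with hRdef
  have hdotmeas : Measurable fun x : Fin n → ℝ => c ⬝ᵥ x := by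
    simp_rw [dotProduct]
    exact Finset.measurable_sum _ fun j _ => by fun_prop
  have hRmeas : Measurable R := by
    refine measurable_pi_lambda _ fun k => ?_
    show Measurable fun x : Fin n → ℝ => x k - ((2 / lam) * (c ⬝ᵥ x)) * c k
    exact (measurable_pi_apply k).sub ((hdotmeas.const_mul _).mul_const (c k))
  have hcR : ∀ x : Fin n → ℝ, c ⬝ᵥ R x = -(c ⬝ᵥ x) := by
    intro x
    rw [hRdef]
    simp only [dotProduct_sub, dotProduct_smul, smul_eq_mul, hcc]
    field_simp
    ring
  have hRR : Function.Involutive R := by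
    intro x
    have h1 : R (R x) = R x - ((2 / lam) * (c ⬝ᵥ R x)) • c := rfl
    rw [h1, hcR x]
    funext k
    simp only [hRdef, Pi.sub_apply, Pi.smul_apply, smul_eq_mul]
    ring
  -- Euclidean picture
  set e : EuclideanSpace ℝ (Fin n) ≃ᵐ (Fin n → ℝ) := (MeasurableEquiv.toLp 2 (Fin n → ℝ)).symm
    with hedef
  set c' : EuclideanSpace ℝ (Fin n) := e.symm c with hc'def
  have hinner : ∀ u v : Fin n → ℝ, (inner ℝ (e.symm u) (e.symm v) : ℝ) = u ⬝ᵥ v := by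
    intro u v
    rw [PiLp.inner_apply]
    simp only [RCLike.inner_apply, conj_trivial, dotProduct]
    exact Finset.sum_congr rfl fun k _ => mul_comm _ _
  have hc'norm : ‖c'‖ ^ 2 = lam := by
    rw [← real_inner_self_eq_norm_sq, hc'def, hinner, hcc]
  have hf : ∀ v : EuclideanSpace ℝ (Fin n),
      Submodule.reflection (ℝ ∙ c')ᗮ v = v - ((2 / lam) * (inner ℝ c' v : ℝ)) • c' := by
    intro v
    rw [Submodule.reflection_orthogonal_apply, Submodule.reflection_singleton_apply]
    simp only [RCLike.ofReal_real_eq_id, id_eq]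
    rw [hc'norm]
    have h3 : (2 : ℕ) • (((inner ℝ c' v : ℝ) / lam) • c') = ((2 / lam) * (inner ℝ c' v : ℝ)) • c' := by
      rw [two_smul, ← add_smul]
      congr 1
      ring
    rw [h3]
    abel
  have hfx : ∀ x : Fin n → ℝ, e (Submodule.reflection (ℝ ∙ c')ᗮ (e.symm x)) = R x := by
    intro x
    have h4 := hf (e.symm x)
    rw [hc'def, hinner, ← hc'def] at h4
    funext k
    have h5 : e (Submodule.reflection (ℝ ∙ c')ᗮ (e.symm x)) k = (Submodule.reflection (ℝ ∙ c')ᗮ (e.symm x)) k := rfl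
    rw [h5, h4]
    rfl
  have hvol : MeasurePreserving R (volume : Measure (Fin n → ℝ)) volume := by
    have h1 := EuclideanSpace.volume_preserving_symm_measurableEquiv_toLp (Fin n)
    have h2 := (Submodule.reflection ((ℝ ∙ c')ᗮ)).measurePreserving
    have h3 := h1.comp (h2.comp h1.symm)
    have h6 : R = ⇑e ∘ (⇑(Submodule.reflection ((ℝ ∙ c')ᗮ)) ∘ ⇑e.symm) := funext fun x => (hfx x).symm
    rw [h6]
    exact h3
  have hns : ∀ y : Fin n → ℝ, ∑ k, (y k) ^ 2 = ‖e.symm y‖ ^ 2 := by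
    intro y
    rw [EuclideanSpace.norm_eq, Real.sq_sqrt (by positivity)]
    refine Finset.sum_congr rfl fun k _ => ?_
    rw [show (e.symm y) k = y k from rfl, Real.norm_eq_abs, sq_abs]
  have hsum : ∀ x : Fin n → ℝ, ∑ k, (R x k) ^ 2 = ∑ k, (x k) ^ 2 := by
    intro x
    rw [hns, hns x]
    have h4 : e.symm (R x) = Submodule.reflection (ℝ ∙ c')ᗮ (e.symm x) := by
      rw [← hfx x]; exact e.symm_apply_apply _
    rw [h4, (Submodule.reflection (ℝ ∙ c')ᗮ).norm_map]
  have hρmeas : Measurable fun x : Fin n → ℝ => ∏ k, gaussianPDF 0 1 (x k) :=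
    Finset.measurable_prod _ fun k _ => (measurable_gaussianPDF 0 1).comp (measurable_pi_apply k)
  have hρR : ((fun x : Fin n → ℝ => ∏ k, gaussianPDF 0 1 (x k)) ∘ R)
      = fun x => ∏ k, gaussianPDF 0 1 (x k) := by
    funext x
    show ∏ k, gaussianPDF 0 1 (R x k) = ∏ k, gaussianPDF 0 1 (x k)
    have hpdf : ∀ y : Fin n → ℝ, ∏ k, gaussianPDF 0 1 (y k)
        = ENNReal.ofReal ((Real.sqrt (2 * Real.pi * ((1:ℝ≥0):ℝ)))⁻¹ ^ n
            * Real.exp (∑ k, -(y k - 0) ^ 2 / (2 * ((1:ℝ≥0):ℝ)))) := by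
      intro y
      simp only [gaussianPDF_def]
      rw [← ENNReal.ofReal_prod_of_nonneg (fun k _ => gaussianPDFReal_nonneg 0 1 (y k))]
      congr 1
      simp only [gaussianPDFReal_def]
      rw [Finset.prod_mul_distrib, Finset.prod_const, ← Real.exp_sum]
      simp [Finset.card_univ]
    have h7 : ∀ y : Fin n → ℝ, ∑ k, -(y k - 0) ^ 2 / (2 * ((1:ℝ≥0):ℝ))
        = -(∑ k, (y k) ^ 2) / 2 := by
      intro y
      simp only [sub_zero, NNReal.coe_one, mul_one]
      rw [← Finset.sum_div, ← Finset.sum_neg_distrib]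
    rw [hpdf, hpdf, h7, h7, hsum]
  refine ⟨hRmeas, ?_⟩
  set eR := MeasurableEquiv.ofInvolutive R hRR hRmeas with heRdef
  have hcoe : ⇑eR = R := rfl
  have hcoes : ⇑eR.symm = R := rfl
  have hmapR : (stdGaussian n).map R = (stdGaussian n).map eR := by rw [hcoe]
  rw [hmapR, stdGaussian_eq_withDensity, map_withDensity_equiv _ eR hρmeas, hcoes, hcoe,
    hvol.map_eq, hρR, ← stdGaussian_eq_withDensity]

/-- If `Y ~ N(0, λ (I - ηW)⁻¹)` with `W` symmetric, zero diagonal, and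
`I - ηW` positive definite, then for each `i` the conditional expectation of `Y_i`
given the σ-algebra generated by `(Y_j)_{j ≠ i}` is `η ∑_{j ≠ i} W i j · Y_j` a.s. -/
theorem car_conditional_mean
    {Ω : Type*} [MeasurableSpace Ω] (P : Measure Ω) [IsProbabilityMeasure P]
    {n : ℕ} (hn : 1 ≤ n) (W : Matrix (Fin n) (Fin n) ℝ)
    (hW : W.IsHermitian) (hWdiag : ∀ i, W i i = 0)
    (η lam : ℝ) (hlam : 0 < lam) (hpd : (1 - η • W).PosDef)
    (Y : Ω → (Fin n → ℝ)) (hYmeas : Measurable Y)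
    (hYlaw : P.map Y = gaussianOfCov (lam • (1 - η • W)⁻¹))
    (i : Fin n) :
    P[(fun ω => Y ω i) |
        MeasurableSpace.comap (fun ω => fun j : {j : Fin n // j ≠ i} => Y ω j)
          inferInstance]
      =ᵐ[P] fun ω => η * ∑ j ∈ Finset.univ.erase i, W i j * Y ω j := by
  classical
  set B : Matrix (Fin n) (Fin n) ℝ := 1 - η • W with hBdef
  set S : Matrix (Fin n) (Fin n) ℝ := lam • B⁻¹ with hSdef
  -- basic symmetry facts
  have hWsym : ∀ a b, W a b = W b a := by
    intro a b
    conv_lhs => rw [← hW.eq]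
    simp [Matrix.conjTranspose_apply]
  have hBsym : ∀ a b, B a b = B b a := by
    intro a b
    simp only [hBdef, Matrix.sub_apply, Matrix.smul_apply, smul_eq_mul, hWsym a b]
    rcases eq_or_ne a b with rfl | hab
    · rfl
    · rw [Matrix.one_apply_ne hab, Matrix.one_apply_ne (Ne.symm hab)]
  have hBinv : (B⁻¹).PosDef := hpd.inv
  have hSpsd : S.PosSemidef := by
    exact hBinv.posSemidef.smul hlam.le
  set M : Matrix (Fin n) (Fin n) ℝ := hSpsd.sqrt with hMdef
  have hMsq : M * M = S := psd_sqrt_mul_self hSpsd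
  have hMherm : M.IsHermitian := psd_sqrt_isHermitian hSpsd
  have hMtrans : Mᵀ = M := by
    ext a b
    conv_rhs => rw [← hMherm.eq]
    simp [Matrix.conjTranspose_apply, Matrix.transpose_apply]
  have hvm : ∀ v : Fin n → ℝ, v ᵥ* M = M *ᵥ v := by
    intro v; rw [← hMtrans, Matrix.vecMul_transpose, hMtrans]
  have hswap : ∀ v x : Fin n → ℝ, v ⬝ᵥ (M *ᵥ x) = (M *ᵥ v) ⬝ᵥ x := by
    intro v x; rw [dotProduct_mulVec, hvm]
  -- the vector d (row i of B) and c = M d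
  set d : Fin n → ℝ := fun j => B i j with hddef
  have hdi : d i = 1 := by
    simp [hddef, hBdef, Matrix.sub_apply, Matrix.smul_apply, Matrix.one_apply_eq, hWdiag i]
  set c : Fin n → ℝ := M *ᵥ d with hcdef
  have hBdet : IsUnit B.det := isUnit_iff_ne_zero.2 hpd.det_pos.ne'
  have hSB : S * B = lam • 1 := by
    rw [hSdef, Matrix.smul_mul, Matrix.nonsing_inv_mul B hBdet]
  have hkey : M *ᵥ c = fun j => if j = i then lam else 0 := by
    rw [hcdef, Matrix.mulVec_mulVec, hMsq]
    funext j
    have h1 : (S *ᵥ d) j = ∑ k, S j k * B k i := by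
      simp only [Matrix.mulVec, dotProduct, hddef]
      exact Finset.sum_congr rfl fun k _ => by rw [hBsym i k]
    rw [h1, ← Matrix.mul_apply, hSB]
    simp only [Matrix.smul_apply, Matrix.one_apply, smul_eq_mul]
    by_cases h : j = i <;> simp [h]
  have hMc : ∀ j, j ≠ i → (M *ᵥ c) j = 0 := by
    intro j hj; rw [hkey]; simp [hj]
  have hcc : c ⬝ᵥ c = lam := by
    have h2 : c ⬝ᵥ c = (M *ᵥ c) ⬝ᵥ d := by
      conv_lhs => rw [hcdef]
      rw [dotProduct_comm, hswap]
    rw [h2, hkey]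
    simp only [dotProduct, ite_mul, zero_mul]
    rw [Finset.sum_ite_eq' Finset.univ i fun j => lam * d j]
    simp [hdi]
  have hZd : ∀ x : Fin n → ℝ,
      d ⬝ᵥ x = x i - η * ∑ j ∈ Finset.univ.erase i, W i j * x j := by
    intro x
    have h3 : ∑ j ∈ Finset.univ.erase i, W i j * x j = ∑ j, W i j * x j :=
      Finset.sum_erase _ (by rw [hWdiag i, zero_mul])
    rw [h3]
    simp only [dotProduct, hddef, hBdef, Matrix.sub_apply, Matrix.smul_apply,
      smul_eq_mul, sub_mul, Finset.sum_sub_distrib, Matrix.one_apply, ite_mul, one_mul, zero_mul,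
      Finset.sum_ite_eq, Finset.mem_univ, if_true, Finset.mul_sum, mul_assoc]
  -- measure-theoretic part
  have hrefl := measurePreserving_reflection_stdGaussian c hlam hcc
  set R : (Fin n → ℝ) → (Fin n → ℝ) := fun x => x - ((2 / lam) * (c ⬝ᵥ x)) • c with hRdef
  have hcRx : ∀ x : Fin n → ℝ, c ⬝ᵥ R x = -(c ⬝ᵥ x) := by
    intro x
    rw [hRdef]
    simp only [dotProduct_sub, dotProduct_smul, smul_eq_mul, hcc]
    field_simp
    ring
  have hdotmeas : Measurable fun x : Fin n → ℝ => c ⬝ᵥ x := by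
    simp only [dotProduct]
    exact Finset.measurable_sum _ fun j _ => by fun_prop
  have hRmeas : Measurable R := by
    refine measurable_pi_lambda _ fun k => ?_
    show Measurable fun x : Fin n → ℝ => x k - ((2 / lam) * (c ⬝ᵥ x)) * c k
    exact (measurable_pi_apply k).sub ((hdotmeas.const_mul _).mul_const (c k))
  have hRR : Function.Involutive R := by
    intro x
    have h1 : R (R x) = R x - ((2 / lam) * (c ⬝ᵥ R x)) • c := rfl
    rw [h1, hcRx x]
    funext k
    simp only [hRdef, Pi.sub_apply, Pi.smul_apply, smul_eq_mul]
    ring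
  have hRemb : MeasurableEmbedding R :=
    (MeasurableEquiv.ofInvolutive R hRR hRmeas).measurableEmbedding
  set L : (Fin n → ℝ) → (Fin n → ℝ) := fun x => M *ᵥ x with hLdef
  have hLmeas : Measurable L := by
    refine measurable_pi_lambda _ fun k => ?_
    show Measurable fun x : Fin n → ℝ => (M *ᵥ x) k
    simp only [Matrix.mulVec, dotProduct]
    exact Finset.measurable_sum _ fun j _ => by fun_prop
  have hμ : P.map Y = (stdGaussian n).map L := by
    rw [hYlaw, gaussianOfCov, dif_pos hSpsd]
  set V : Ω → ({j : Fin n // j ≠ i} → ℝ) := fun ω => fun j => Y ω j with hVdef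
  have hVmeas : Measurable V :=
    measurable_pi_lambda _ fun j => (measurable_pi_apply (j : Fin n)).comp hYmeas
  have hm : MeasurableSpace.comap V inferInstance ≤ ‹MeasurableSpace Ω› := hVmeas.comap_le
  set proj : (Fin n → ℝ) → ({j : Fin n // j ≠ i} → ℝ) := fun x j => x j with hprojdef
  have hprojmeas : Measurable proj :=
    measurable_pi_lambda _ fun j => measurable_pi_apply (j : Fin n)
  have hYint : ∀ k : Fin n, Integrable (fun ω => Y ω k) P := by
    intro k
    have h1 : Integrable (fun x : Fin n → ℝ => x k) ((stdGaussian n).map L) := by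
      rw [integrable_map_measure (measurable_pi_apply k).aestronglyMeasurable
        hLmeas.aemeasurable]
      have h2 : ((fun x : Fin n → ℝ => x k) ∘ L) = fun x => (fun j => M k j) ⬝ᵥ x := rfl
      rw [h2]
      exact integrable_dot_stdGaussian n _
    rw [← hμ] at h1
    exact (integrable_map_measure (measurable_pi_apply k).aestronglyMeasurable
      hYmeas.aemeasurable).mp h1
  have hfint : Integrable (fun ω => Y ω i) P := hYint i
  have hgint : Integrable (fun ω => η * ∑ j ∈ Finset.univ.erase i, W i j * Y ω j) P :=
    (integrable_finset_sum _ fun j _ => (hYint j).const_mul (W i j)).const_mul η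
  set h' : ({j : Fin n // j ≠ i} → ℝ) → ℝ :=
    fun v => η * ∑ j : {j : Fin n // j ≠ i}, W i j * v j with hh'def
  have hh'meas : Measurable h' := by
    rw [hh'def]
    exact (Finset.measurable_sum (Finset.univ : Finset {j : Fin n // j ≠ i})
      fun j _ => by fun_prop).const_mul η
  have hgcomp : (fun ω => η * ∑ j ∈ Finset.univ.erase i, W i j * Y ω j) = h' ∘ V := by
    funext ω
    show _ = η * ∑ j : {j : Fin n // j ≠ i}, W i j * Y ω j
    congr 1
    exact Finset.sum_subtype _ (by simp) _
  have hgm : AEStronglyMeasurable[MeasurableSpace.comap V inferInstance]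
      (fun ω => η * ∑ j ∈ Finset.univ.erase i, W i j * Y ω j) P := by
    have hmeasg : Measurable[MeasurableSpace.comap V inferInstance] (h' ∘ V) :=
      fun A hA => ⟨h' ⁻¹' A, hh'meas hA, rfl⟩
    rw [hgcomp]
    exact StronglyMeasurable.aestronglyMeasurable hmeasg.stronglyMeasurable
  have hsetint : ∀ s : Set Ω, MeasurableSet[MeasurableSpace.comap V inferInstance] s →
      ∫ ω in s, (η * ∑ j ∈ Finset.univ.erase i, W i j * Y ω j) ∂P = ∫ ω in s, Y ω i ∂P := by
    rintro s ⟨Bs, hBs, rfl⟩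
    set G : (Fin n → ℝ) → ℝ := fun x => Set.indicator (proj ⁻¹' Bs) (fun y => d ⬝ᵥ y) x
      with hGdef2
    have hdmeas : Measurable fun x : Fin n → ℝ => d ⬝ᵥ x := by
      simp only [dotProduct]
      exact Finset.measurable_sum _ fun j _ => by fun_prop
    have hGmeas : Measurable G := hdmeas.indicator (hprojmeas hBs)
    have hLR : ∀ x : Fin n → ℝ, proj (L (R x)) = proj (L x) := by
      intro x
      funext j
      show (M *ᵥ (R x)) (j : Fin n) = (M *ᵥ x) (j : Fin n)
      rw [hRdef]
      rw [Matrix.mulVec_sub, Matrix.mulVec_smul]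
      simp only [Pi.sub_apply, Pi.smul_apply, smul_eq_mul, hMc _ j.prop, mul_zero, sub_zero]
    have hdL : ∀ x : Fin n → ℝ, d ⬝ᵥ (L x) = c ⬝ᵥ x := by
      intro x
      show d ⬝ᵥ (M *ᵥ x) = c ⬝ᵥ x
      rw [hswap]
    have hHR : ∀ x : Fin n → ℝ, G (L (R x)) = - G (L x) := by
      intro x
      by_cases hmem : L x ∈ proj ⁻¹' Bs
      · have hmem' : L (R x) ∈ proj ⁻¹' Bs := by
          show proj (L (R x)) ∈ Bs
          rw [hLR]
          exact hmem
        rw [hGdef2]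
        simp only
        rw [Set.indicator_of_mem hmem', Set.indicator_of_mem hmem, hdL, hdL, hcRx]
      · have hmem' : L (R x) ∉ proj ⁻¹' Bs := by
          show ¬ proj (L (R x)) ∈ Bs
          rw [hLR]
          exact hmem
        rw [hGdef2]
        simp only
        rw [Set.indicator_of_notMem hmem', Set.indicator_of_notMem hmem, neg_zero]
    have h0 : ∫ x, G (L x) ∂(stdGaussian n) = 0 := by
      have h0a : ∫ x, G (L (R x)) ∂(stdGaussian n) = ∫ x, G (L x) ∂(stdGaussian n) :=
        hrefl.integral_comp hRemb fun x => G (L x)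
      have h0b : ∫ x, G (L (R x)) ∂(stdGaussian n)
          = ∫ x, - G (L x) ∂(stdGaussian n) := by
        refine integral_congr_ae (ae_of_all _ fun x => ?_)
        exact hHR x
      rw [h0b, integral_neg] at h0a
      linarith
    have hintD : ∫ ω in V ⁻¹' Bs, (d ⬝ᵥ Y ω) ∂P = 0 := by
      have e1 : ∫ ω in V ⁻¹' Bs, (d ⬝ᵥ Y ω) ∂P = ∫ ω, G (Y ω) ∂P := by
        rw [← integral_indicator (hVmeas hBs)]
        refine integral_congr_ae (ae_of_all _ fun ω => ?_)
        by_cases hω : ω ∈ V ⁻¹' Bs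
        · have hω' : Y ω ∈ proj ⁻¹' Bs := hω
          rw [Set.indicator_of_mem hω, hGdef2]
          simp only
          rw [Set.indicator_of_mem hω']
        · have hω' : Y ω ∉ proj ⁻¹' Bs := hω
          rw [Set.indicator_of_notMem hω, hGdef2]
          simp only
          rw [Set.indicator_of_notMem hω']
      have e2 : ∫ ω, G (Y ω) ∂P = ∫ x, G x ∂(P.map Y) :=
        (integral_map hYmeas.aemeasurable hGmeas.aestronglyMeasurable).symm
      have e3 : ∫ x, G x ∂((stdGaussian n).map L) = ∫ x, G (L x) ∂(stdGaussian n) :=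
        integral_map hLmeas.aemeasurable hGmeas.aestronglyMeasurable
      rw [e1, e2, hμ, e3, h0]
    have hsub : ∫ ω in V ⁻¹' Bs, (Y ω i) ∂P
        - ∫ ω in V ⁻¹' Bs, (η * ∑ j ∈ Finset.univ.erase i, W i j * Y ω j) ∂P = 0 := by
      rw [← integral_sub hfint.integrableOn hgint.integrableOn]
      have e4 : (fun ω => Y ω i - η * ∑ j ∈ Finset.univ.erase i, W i j * Y ω j)
          = fun ω => d ⬝ᵥ Y ω := funext fun ω => (hZd (Y ω)).symm
      calc ∫ ω in V ⁻¹' Bs, (Y ω i - η * ∑ j ∈ Finset.univ.erase i, W i j * Y ω j) ∂P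
          = ∫ ω in V ⁻¹' Bs, (d ⬝ᵥ Y ω) ∂P := by rw [e4]
        _ = 0 := hintD
    linarith
  exact (ae_eq_condExp_of_forall_setIntegral_eq hm hfint
    (fun s _ _ => hgint.integrableOn) (fun s hs _ => hsetint s hs) hgm).symm
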